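/- Let S be the 4×4 real matrix with rows (1,2,1,2), (1,1,1,1), (1,2,-1,-2), (1,1,-1,-1) (i.e., S = H_2 ⊗ T with H_2 = [[1,1],[1,-1]], T = [[1,2],[1,1]]). Then S is invertible, S is not a Perron similarity, yet there exists x ∈ ℝ^4 not a nonnegative multiple of the all-ones vector such that S D_x S^{-1} ≥ 0 (e.g., x = (2,2,-1,-1) yields a nonnegative nonscalar matrix). Hence the cone 𝒞(S) properly contains coni(e) while S is not a Perron similarity. -/
import Mathlib


/-- A real invertible matrix is a Perron similarity if one of its columns and the
corresponding row of its inverse are both nonnegative or both nonpositive. -/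
def IsPerronSimilarity {n : ℕ} (S : Matrix (Fin n) (Fin n) ℝ) : Prop :=
  IsUnit S.det ∧ ∃ i,
    ((∀ r, 0 ≤ S r i) ∧ (∀ c, 0 ≤ S⁻¹ i c)) ∨
    ((∀ r, S r i ≤ 0) ∧ (∀ c, S⁻¹ i c ≤ 0))

private noncomputable def Smat : Matrix (Fin 4) (Fin 4) ℝ :=
  !![1, 2, 1, 2; 1, 1, 1, 1; 1, 2, -1, -2; 1, 1, -1, -1]

private noncomputable def Bmat : Matrix (Fin 4) (Fin 4) ℝ :=
  !![-1/2, 1, -1/2, 1; 1/2, -1/2, 1/2, -1/2; -1/2, 1, 1/2, -1; 1/2, -1/2, -1/2, 1/2]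

private lemma SB : Smat * Bmat = 1 := by
  ext i j
  fin_cases i <;> fin_cases j <;>
    simp [Smat, Bmat, Matrix.mul_apply, Fin.sum_univ_four, Matrix.one_apply] <;> norm_num

private lemma Sinv : Smat⁻¹ = Bmat := Matrix.inv_eq_right_inv SB

/-- The matrix `S = H₂ ⊗ [[1,2],[1,1]]` is invertible and not a Perron similarity,
yet there exists `x` (e.g. `x = (2,2,-1,-1)`) that is not a nonnegative multiple of
the all-ones vector with `S D_x S⁻¹ ≥ 0`; hence `𝒞(S)` properly contains `coni(e)`
while `S` is not a Perron similarity, refuting Corollary 3.17 of Johnson–Paparella. -/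
theorem counterexample_JP_cor_3_17 :
    letI S : Matrix (Fin 4) (Fin 4) ℝ :=
      !![1, 2, 1, 2; 1, 1, 1, 1; 1, 2, -1, -2; 1, 1, -1, -1]
    IsUnit S.det ∧ ¬IsPerronSimilarity S ∧
      ∃ x : Fin 4 → ℝ,
        (∀ i j, 0 ≤ (S * Matrix.diagonal x * S⁻¹) i j) ∧
        ∀ α : ℝ, 0 ≤ α → x ≠ fun _ : Fin 4 => α := by
  show IsUnit Smat.det ∧ ¬IsPerronSimilarity Smat ∧
      ∃ x : Fin 4 → ℝ,
        (∀ i j, 0 ≤ (Smat * Matrix.diagonal x * Smat⁻¹) i j) ∧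
        ∀ α : ℝ, 0 ≤ α → x ≠ fun _ : Fin 4 => α
  have hdet : IsUnit Smat.det := Matrix.isUnit_det_of_right_inverse SB
  refine ⟨hdet, ?_, ?_⟩
  · rintro ⟨-, i, h⟩
    fin_cases i <;> rcases h with ⟨h1, h2⟩ | ⟨h1, h2⟩
    · have := h2 0; rw [Sinv] at this; simp [Bmat] at this; linarith
    · have := h1 0; simp [Smat] at this; linarith
    · have := h2 1; rw [Sinv] at this; simp [Bmat] at this; linarith
    · have := h1 0; simp [Smat] at this; linarith
    · have := h1 2; simp [Smat] at this; linarith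
    · have := h1 0; simp [Smat] at this; linarith
    · have := h1 2; simp [Smat] at this; linarith
    · have := h1 0; simp [Smat] at this; linarith
  · refine ⟨![2, 2, -1, -1], ?_, ?_⟩
    · intro i j
      have hd : Matrix.diagonal (![2, 2, -1, -1] : Fin 4 → ℝ) =
          !![2, 0, 0, 0; 0, 2, 0, 0; 0, 0, -1, 0; 0, 0, 0, -1] := by
        ext a b
        fin_cases a <;> fin_cases b <;>
          simp [Matrix.diagonal_apply, Matrix.vecHead, Matrix.vecTail]
      rw [Sinv, hd]
      fin_cases i <;> fin_cases j <;>
        simp [Smat, Bmat, Matrix.mul_apply, Fin.sum_univ_four] <;> norm_num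
    · intro α hα hx
      have h0 := congrFun hx 0
      have h2 := congrFun hx 2
      simp at h0 h2
      linarith
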